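/- For s ≥ 2, let T_s ∈ ℝ^{2^s × 2^s} be the tridiagonal matrix with −2 on the main diagonal and 1 on the first sub- and super-diagonals. Then T_s = I₂ ⊗ T_{s−1} + σ₋ ⊗ σ₊^{⊗(s−1)} + σ₊ ⊗ σ₋^{⊗(s−1)}, where σ₊ = E₀₁ and σ₋ = E₁₀ are 2×2 matrix units, ⊗ is the Kronecker product and σ^{⊗(s−1)} the (s−1)-fold Kronecker power; moreover T₁ = −2I₂ + σ₋ + σ₊. -/

import Mathlib

/-- The tridiagonal matrix with `−2` on the diagonal and `1` on the first sub-
and super-diagonals (size `m × m`). -/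
def Tmat (m : ℕ) : Matrix (Fin m) (Fin m) ℝ :=
  Matrix.of fun i j =>
    if (i : ℕ) = (j : ℕ) then -2
    else if (i : ℕ) + 1 = (j : ℕ) ∨ (j : ℕ) + 1 = (i : ℕ) then 1 else 0

/-- `σ₊ = E₀₁`. -/
def sigmaPlus : Matrix (Fin 2) (Fin 2) ℝ := Matrix.single 0 1 1

/-- `σ₋ = E₁₀`. -/
def sigmaMinus : Matrix (Fin 2) (Fin 2) ℝ := Matrix.single 1 0 1

/-- Identification `Fin 2 × Fin 2^k ≃ Fin 2^(k+1)` sending `(a, i)` to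
`a·2^k + i`, i.e. the left factor is the most significant binary digit. -/
def qIdx (k : ℕ) : Fin 2 × Fin (2 ^ k) ≃ Fin (2 ^ (k + 1)) :=
  finProdFinEquiv.trans (finCongr (by ring))

/-- Kronecker product `X ⊗ Y` of a `2×2` matrix with a `2^k × 2^k` matrix,
realized on `Fin 2^(k+1)` with the left factor most significant. -/
noncomputable def qkron {k : ℕ} (X : Matrix (Fin 2) (Fin 2) ℝ)
    (Y : Matrix (Fin (2 ^ k)) (Fin (2 ^ k)) ℝ) :
    Matrix (Fin (2 ^ (k + 1))) (Fin (2 ^ (k + 1))) ℝ :=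
  Matrix.reindex (qIdx k) (qIdx k) (Matrix.kroneckerMap (· * ·) X Y)

/-- `k`-fold Kronecker power of a `2×2` matrix. -/
noncomputable def qkronPow : (k : ℕ) → Matrix (Fin 2) (Fin 2) ℝ → Matrix (Fin (2 ^ k)) (Fin (2 ^ k)) ℝ
  | 0, _ => 1
  | k + 1, X => qkron X (qkronPow k X)

lemma qIdx_val (k : ℕ) (a : Fin 2) (i : Fin (2 ^ k)) :
    ((qIdx k (a, i)) : ℕ) = (i : ℕ) + 2 ^ k * (a : ℕ) := by
  simp [qIdx, finProdFinEquiv]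

lemma qkron_apply {k : ℕ} (X : Matrix (Fin 2) (Fin 2) ℝ)
    (Y : Matrix (Fin (2 ^ k)) (Fin (2 ^ k)) ℝ) (a b : Fin 2) (i j : Fin (2 ^ k)) :
    qkron X Y (qIdx k (a, i)) (qIdx k (b, j)) = X a b * Y i j := by
  simp [qkron]

lemma qkronPow_plus (k : ℕ) (i j : Fin (2 ^ k)) :
    qkronPow k sigmaPlus i j =
      if (i : ℕ) = 0 ∧ (j : ℕ) = 2 ^ k - 1 then 1 else 0 := by
  induction k with
  | zero =>
      have hi : (i : ℕ) = 0 := by omega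
      have hj : (j : ℕ) = 0 := by omega
      have hij : i = j := Fin.ext (by omega)
      simp [qkronPow, Matrix.one_apply, hij, hi, hj]
  | succ k ih =>
      obtain ⟨⟨a, i⟩, rfl⟩ := (qIdx k).surjective i
      obtain ⟨⟨b, j⟩, rfl⟩ := (qIdx k).surjective j
      have hk : 1 ≤ 2 ^ k := Nat.one_le_two_pow
      have h2 : (2 : ℕ) ^ (k + 1) = 2 * 2 ^ k := by ring
      rw [show qkronPow (k+1) sigmaPlus = qkron sigmaPlus (qkronPow k sigmaPlus) from rfl,
        qkron_apply, ih, qIdx_val, qIdx_val]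
      have hi := i.isLt
      have hj := j.isLt
      fin_cases a <;> fin_cases b <;>
        simp [sigmaPlus, Matrix.single, h2, -Fin.val_eq_zero_iff] <;>
        · first | omega | (split_ifs <;> first | rfl | omega)

lemma qkronPow_minus (k : ℕ) (i j : Fin (2 ^ k)) :
    qkronPow k sigmaMinus i j =
      if (i : ℕ) = 2 ^ k - 1 ∧ (j : ℕ) = 0 then 1 else 0 := by
  induction k with
  | zero =>
      have hi : (i : ℕ) = 0 := by omega
      have hj : (j : ℕ) = 0 := by omega
      have hij : i = j := Fin.ext (by omega)
      simp [qkronPow, Matrix.one_apply, hij, hi, hj]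
  | succ k ih =>
      obtain ⟨⟨a, i⟩, rfl⟩ := (qIdx k).surjective i
      obtain ⟨⟨b, j⟩, rfl⟩ := (qIdx k).surjective j
      have hk : 1 ≤ 2 ^ k := Nat.one_le_two_pow
      have h2 : (2 : ℕ) ^ (k + 1) = 2 * 2 ^ k := by ring
      rw [show qkronPow (k+1) sigmaMinus = qkron sigmaMinus (qkronPow k sigmaMinus) from rfl,
        qkron_apply, ih, qIdx_val, qIdx_val]
      have hi := i.isLt
      have hj := j.isLt
      fin_cases a <;> fin_cases b <;>
        simp [sigmaMinus, Matrix.single, h2, -Fin.val_eq_zero_iff] <;>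
        · first | omega | (split_ifs <;> first | rfl | omega)

/-- **Sigma-basis recursion for the discrete diffusion matrix.**  For `s ≥ 2`
(here `s = k + 2`), the `2^s × 2^s` tridiagonal matrix `T_s` with `−2` on the
diagonal and `1` on the first off-diagonals satisfies
`T_s = I₂ ⊗ T_{s−1} + σ₋ ⊗ σ₊^{⊗(s−1)} + σ₊ ⊗ σ₋^{⊗(s−1)}`;
moreover `T₁ = −2I₂ + σ₋ + σ₊`. -/
theorem tridiagonal_kronecker_recursion :
    (∀ k : ℕ, Tmat (2 ^ (k + 2)) =
        qkron (1 : Matrix (Fin 2) (Fin 2) ℝ) (Tmat (2 ^ (k + 1))) +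
        qkron sigmaMinus (qkronPow (k + 1) sigmaPlus) +
        qkron sigmaPlus (qkronPow (k + 1) sigmaMinus)) ∧
    Tmat (2 ^ 1) = (-2 : ℝ) • (1 : Matrix (Fin 2) (Fin 2) ℝ) + sigmaMinus + sigmaPlus := by
  constructor
  · intro k
    ext p q
    obtain ⟨⟨a, i⟩, rfl⟩ := (qIdx (k + 1)).surjective p
    obtain ⟨⟨b, j⟩, rfl⟩ := (qIdx (k + 1)).surjective q
    have hk : 2 ≤ 2 ^ (k + 1) := Nat.one_lt_two_pow (by omega)
    have hi := i.isLt
    have hj := j.isLt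
    simp only [Matrix.add_apply, qkron_apply, qkronPow_plus, qkronPow_minus,
      Tmat, Matrix.of_apply, qIdx_val, Matrix.one_apply]
    fin_cases a <;> fin_cases b <;>
      simp [sigmaPlus, sigmaMinus, Matrix.single, -Fin.val_eq_zero_iff] <;>
      · split_ifs <;> first | rfl | omega
  · ext i j
    fin_cases i <;> fin_cases j <;>
      simp [Tmat, sigmaPlus, sigmaMinus, Matrix.single, Matrix.one_apply]
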